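/- Let d ≥ 2 be an integer and let T be a simple graph that is connected, acyclic, and in which every vertex has degree d + 1 (the infinite (d+1)-regular tree). Then there exists a constant c > 0, depending only on d, such that for every n ≥ 1 and all vertices x, y of T, the number of walks of length n from x to y in T is at most e^{−c·n}·(d+1)^n. Equivalently, the n-step transition probability of the simple random walk on T (which at each step moves to a uniformly chosen neighbour) satisfies p_n(x,y) ≤ e^{−c·n}. -/

import Mathlib

/-- The number of walks of length `n` from `x` to `y` in the simple graph `T`
(sequences of `n+1` vertices starting at `x`, ending at `y`, with consecutive
vertices adjacent). -/
noncomputable def walkCount {V : Type*} (T : SimpleGraph V) (n : ℕ) (x y : V) : ℕ :=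
  {f : Fin (n + 1) → V |
    f 0 = x ∧ f (Fin.last n) = y ∧ ∀ i : Fin n, T.Adj (f i.castSucc) (f i.succ)}.ncard

namespace RTHKD

open SimpleGraph

variable {V : Type*} {T : SimpleGraph V}

open scoped Classical

/-- The set of walk-functions. -/
def WSet (T : SimpleGraph V) (n : ℕ) (x y : V) : Set (Fin (n + 1) → V) :=
  {f | f 0 = x ∧ f (Fin.last n) = y ∧ ∀ i : Fin n, T.Adj (f i.castSucc) (f i.succ)}

lemma walkCount_eq (n : ℕ) (x y : V) : walkCount T n x y = (WSet T n x y).ncard := rfl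

lemma WSet_zero (x y : V) :
    WSet T 0 x y = if x = y then {fun _ => x} else (∅ : Set (Fin 1 → V)) := by
  classical
  ext f
  constructor
  · rintro ⟨h0, hl, -⟩
    have hxy : x = y := by rw [← h0, ← hl]; rfl
    simp only [hxy, if_pos rfl, Set.mem_singleton_iff]
    funext i
    have hi : i = 0 := Fin.fin_one_eq_zero i
    rw [hi, h0, hxy]
  · intro hf
    by_cases hxy : x = y
    · rw [if_pos hxy, Set.mem_singleton_iff] at hf
      subst hf
      exact ⟨rfl, hxy.symm ▸ rfl, fun i => i.elim0⟩
    · rw [if_neg hxy] at hf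
      exact absurd hf (Set.notMem_empty f)

lemma walkCount_zero (x y : V) :
    walkCount T 0 x y = if x = y then 1 else 0 := by
  classical
  rw [walkCount_eq, WSet_zero]
  by_cases hxy : x = y <;> simp [hxy]

/-- Tail map membership: forward direction structure. -/
lemma tail_mem {n : ℕ} {z y : V} {f : Fin (n + 2) → V} (hf : f ∈ WSet T (n + 1) z y) :
    T.Adj z (f 1) ∧ (f ∘ Fin.succ) ∈ WSet T n (f 1) y := by
  obtain ⟨h0, hl, hadj⟩ := hf
  refine ⟨?_, ?_, ?_, ?_⟩
  · have := hadj 0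
    rwa [Fin.castSucc_zero, h0, Fin.succ_zero_eq_one] at this
  · simp [Fin.succ_zero_eq_one]
  · show f ((Fin.last n).succ) = y
    rw [Fin.succ_last]; exact hl
  · intro i
    have := hadj i.succ
    rwa [← Fin.succ_castSucc] at this

lemma cons_mem {n : ℕ} {z y w : V} (hw : T.Adj z w) {g : Fin (n + 1) → V}
    (hg : g ∈ WSet T n w y) :
    (Fin.cases z g : Fin (n + 2) → V) ∈ WSet T (n + 1) z y := by
  obtain ⟨h0, hl, hadj⟩ := hg
  refine ⟨by simp, ?_, ?_⟩
  · show (Fin.cases z g : Fin (n + 2) → V) (Fin.last (n + 1)) = y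
    rw [← Fin.succ_last]
    simp only [Fin.cases_succ]; exact hl
  · intro i
    induction i using Fin.cases with
    | zero =>
      rw [Fin.castSucc_zero, Fin.succ_zero_eq_one]
      have h1 : (1 : Fin (n + 2)) = Fin.succ 0 := (Fin.succ_zero_eq_one).symm
      rw [h1]
      simp only [Fin.cases_zero, Fin.cases_succ]
      rw [h0]
      exact hw
    | succ j =>
      rw [← Fin.succ_castSucc]
      simpa using hadj j

lemma tail_injOn {n : ℕ} {z y : V} :
    Set.InjOn (fun f : Fin (n + 2) → V => f ∘ Fin.succ) (WSet T (n + 1) z y) := by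
  intro f1 h1 f2 h2 heq
  funext i
  induction i using Fin.cases with
  | zero => rw [h1.1, h2.1]
  | succ j => exact congrFun heq j

lemma tail_image {n : ℕ} {z y : V} :
    (fun f : Fin (n + 2) → V => f ∘ Fin.succ) '' (WSet T (n + 1) z y) =
      ⋃ w ∈ T.neighborSet z, WSet T n w y := by
  ext g
  simp only [Set.mem_image, Set.mem_iUnion, mem_neighborSet]
  constructor
  · rintro ⟨f, hf, rfl⟩
    obtain ⟨hadj, hmem⟩ := tail_mem hf
    refine ⟨f 1, hadj, ?_⟩
    convert hmem
  · rintro ⟨w, hw, hg⟩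
    refine ⟨Fin.cases z g, cons_mem hw hg, ?_⟩
    funext i
    simp

lemma WSet_finite (hloc : ∀ v : V, (T.neighborSet v).Finite) :
    ∀ (n : ℕ) (x y : V), (WSet T n x y).Finite := by
  intro n
  induction n with
  | zero =>
    intro x y
    rw [WSet_zero]
    by_cases hxy : x = y
    · rw [if_pos hxy]; exact Set.finite_singleton _
    · rw [if_neg hxy]; exact Set.finite_empty
  | succ n ih =>
    intro z y
    refine Set.Finite.of_finite_image ?_ tail_injOn
    rw [tail_image]
    exact Set.Finite.biUnion (hloc z) fun w _ => ih w y

lemma walkCount_succ (hloc : ∀ v : V, (T.neighborSet v).Finite) (n : ℕ) (z y : V) :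
    walkCount T (n + 1) z y = ∑ w ∈ (hloc z).toFinset, walkCount T n w y := by
  classical
  rw [walkCount_eq]
  show (WSet T (n + 1) z y).ncard = _
  rw [← Set.ncard_image_of_injOn tail_injOn, tail_image]
  have hcoe : (⋃ w ∈ T.neighborSet z, WSet T n w y) =
      ↑((hloc z).toFinset.biUnion fun w => (WSet_finite hloc n w y).toFinset) := by
    rw [Finset.coe_biUnion]
    simp only [Set.Finite.coe_toFinset, Set.Finite.mem_toFinset]
  rw [hcoe, Set.ncard_coe_finset, Finset.card_biUnion]
  · exact Finset.sum_congr rfl fun w _ => by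
      rw [walkCount_eq, Set.ncard_eq_toFinset_card _ (WSet_finite hloc n w y)]
  · intro w1 h1 w2 h2 hne
    simp only [Finset.disjoint_left, Set.Finite.mem_toFinset]
    intro g hg1 hg2
    exact hne (hg1.1.symm.trans hg2.1)

section Tree

open SimpleGraph Walk

lemma path_length_eq_dist (hc : T.Connected) (ha : T.IsAcyclic) {u v : V}
    {p : T.Walk u v} (hp : p.IsPath) : p.length = T.dist u v := by
  obtain ⟨q, hq, hql⟩ := hc.exists_path_of_dist u v
  have huniq := (SimpleGraph.isAcyclic_iff_path_unique.mp ha)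
    (⟨p, hp⟩ : T.Path u v) (⟨q, hq⟩ : T.Path u v)
  have hpq : p = q := congrArg Subtype.val huniq
  rw [hpq, hql]

lemma adj_dist_cases (hc : T.Connected) (ha : T.IsAcyclic) {z w y : V} (h : T.Adj z w) :
    T.dist w y + 1 = T.dist z y ∨ T.dist z y + 1 = T.dist w y := by
  have hzw : T.dist z w = 1 := SimpleGraph.dist_eq_one_iff_adj.mpr h
  have hwz : T.dist w z = 1 := SimpleGraph.dist_eq_one_iff_adj.mpr h.symm
  have h1 : T.dist z y ≤ T.dist w y + 1 := by
    have := hc.dist_triangle (u := z) (v := w) (w := y)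
    omega
  have h2 : T.dist w y ≤ T.dist z y + 1 := by
    have := hc.dist_triangle (u := w) (v := z) (w := y)
    omega
  have hne : T.dist z y ≠ T.dist w y := by
    intro heq
    by_cases hj : T.dist w y = 0
    · have hwy : w = y := hc.dist_eq_zero_iff.mp hj
      have hzy : z = y := hc.dist_eq_zero_iff.mp (heq.trans hj)
      exact h.ne (hzy.trans hwy.symm)
    · obtain ⟨q, hq, hql⟩ := hc.exists_path_of_dist w y
      by_cases hz : z ∈ q.support
      · have hdrop : T.dist z y ≤ (q.dropUntil z hz).length := SimpleGraph.dist_le _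
        have hspec : (q.takeUntil z hz).append (q.dropUntil z hz) = q := q.take_spec hz
        have hlen : (q.takeUntil z hz).length + (q.dropUntil z hz).length = q.length := by
          rw [← Walk.length_append, hspec]
        have htake : 0 < (q.takeUntil z hz).length := by
          rcases Nat.eq_zero_or_pos (q.takeUntil z hz).length with h0 | h0
          · exact absurd (Walk.eq_of_length_eq_zero h0).symm h.ne
          · exact h0
        omega
      · have hpath : (Walk.cons h q).IsPath := hq.cons hz
        have hlen := path_length_eq_dist hc ha hpath
        rw [Walk.length_cons, hql] at hlen
        omega
  omega

lemma closer_unique (hc : T.Connected) (ha : T.IsAcyclic) {z y w1 w2 : V}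
    (h1 : T.Adj z w1) (h2 : T.Adj z w2)
    (hd1 : T.dist w1 y + 1 = T.dist z y) (hd2 : T.dist w2 y + 1 = T.dist z y) : w1 = w2 := by
  obtain ⟨q1, hq1, hl1⟩ := hc.exists_path_of_dist w1 y
  obtain ⟨q2, hq2, hl2⟩ := hc.exists_path_of_dist w2 y
  have hz1 : z ∉ q1.support := by
    intro hz
    have hd : T.dist z y ≤ (q1.dropUntil z hz).length := SimpleGraph.dist_le _
    have hle := q1.length_dropUntil_le hz
    omega
  have hz2 : z ∉ q2.support := by
    intro hz
    have hd : T.dist z y ≤ (q2.dropUntil z hz).length := SimpleGraph.dist_le _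
    have hle := q2.length_dropUntil_le hz
    omega
  have huniq := (SimpleGraph.isAcyclic_iff_path_unique.mp ha)
    (⟨Walk.cons h1 q1, hq1.cons hz1⟩ : T.Path z y) (⟨Walk.cons h2 q2, hq2.cons hz2⟩ : T.Path z y)
  have hval : Walk.cons h1 q1 = Walk.cons h2 q2 := congrArg Subtype.val huniq
  have hv := congrArg (fun p : T.Walk z y => p.getVert 1) hval
  simpa [Walk.getVert_cons_succ, Walk.getVert_zero] using hv

end Tree

section Main

lemma key_bound {d : ℕ} (hd : 2 ≤ d) (hc : T.Connected) (ha : T.IsAcyclic)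
    (hreg : ∀ v : V, (T.neighborSet v).ncard = d + 1) (y : V) :
    ∀ (n : ℕ) (z : V),
      (walkCount T n z y : ℝ) ≤
        (2 * Real.sqrt d) ^ n * ((Real.sqrt d)⁻¹) ^ (T.dist z y) := by
  classical
  have hloc : ∀ v : V, (T.neighborSet v).Finite := fun v =>
    Set.finite_of_ncard_ne_zero (by rw [hreg v]; omega)
  have hdR : (2:ℝ) ≤ (d:ℝ) := by exact_mod_cast hd
  have hdpos : (0:ℝ) < d := by linarith
  have hd0 : (0:ℝ) < Real.sqrt d := Real.sqrt_pos.mpr hdpos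
  set s : ℝ := (Real.sqrt d)⁻¹ with hs_def
  have hspos : 0 < s := inv_pos.mpr hd0
  have hs1 : Real.sqrt d * s = 1 := mul_inv_cancel₀ hd0.ne'
  have hsq : Real.sqrt d * Real.sqrt d = (d:ℝ) := Real.mul_self_sqrt hdpos.le
  have hds : (d:ℝ) * s = Real.sqrt d := by
    nth_rewrite 1 [← hsq]
    rw [mul_assoc, hs1, mul_one]
  intro n
  induction n with
  | zero =>
    intro z
    rw [walkCount_zero]
    by_cases h : z = y
    · subst h
      simp [SimpleGraph.dist_self]
    · simp only [if_neg h, Nat.cast_zero, pow_zero, one_mul]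
      positivity
  | succ n ih =>
    intro z
    rw [walkCount_succ hloc]
    push_cast
    set t : Finset V := (hloc z).toFinset with ht_def
    have hmem_t : ∀ w, w ∈ t → T.Adj z w := fun w hw => (Set.Finite.mem_toFinset _).mp hw
    have htc : t.card = d + 1 := by
      rw [ht_def, ← Set.ncard_eq_toFinset_card _ (hloc z), hreg z]
    set j : ℕ := T.dist z y with hj_def
    set C : Finset V := t.filter (fun w => T.dist w y + 1 = j) with hC_def
    have hCsub : C ⊆ t := Finset.filter_subset _ _
    have hC1 : C.card ≤ 1 := by
      rw [Finset.card_le_one]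
      intro w1 hw1 w2 hw2
      rw [hC_def, Finset.mem_filter] at hw1 hw2
      exact closer_unique hc ha (hmem_t _ hw1.1) (hmem_t _ hw2.1) hw1.2 hw2.2
    have hfar : ∀ w ∈ t \ C, T.dist w y = j + 1 := by
      intro w hw
      rw [Finset.mem_sdiff] at hw
      rcases adj_dist_cases hc ha (hmem_t _ hw.1) with hcl | hfr
      · exact absurd (Finset.mem_filter.mpr ⟨hw.1, hcl⟩) hw.2
      · omega
    -- the key geometric estimate
    have hkey : ∑ w ∈ t, s ^ (T.dist w y) ≤ 2 * Real.sqrt d * s ^ j := by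
      have hsplit : ∑ w ∈ t, s ^ (T.dist w y) =
          ∑ w ∈ C, s ^ (T.dist w y) + ∑ w ∈ t \ C, s ^ (T.dist w y) := by
        conv_rhs => rw [hC_def, ← Finset.filter_not]
        exact (Finset.sum_filter_add_sum_filter_not t (fun w => T.dist w y + 1 = j) _).symm
      have hCsum : ∑ w ∈ C, s ^ (T.dist w y) = C.card * (Real.sqrt d * s ^ j) := by
        rw [Finset.sum_congr rfl (fun w hw => ?_), Finset.sum_const, nsmul_eq_mul]
        rw [hC_def, Finset.mem_filter] at hw
        rw [← hw.2, pow_succ, mul_comm (s ^ T.dist w y) s, ← mul_assoc, hs1, one_mul]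
      have hFsum : ∑ w ∈ t \ C, s ^ (T.dist w y) = ((t \ C).card : ℝ) * (s * s ^ j) := by
        rw [Finset.sum_congr rfl (fun w hw => ?_), Finset.sum_const, nsmul_eq_mul]
        rw [hfar w hw, pow_succ, mul_comm]
      have hcards : (t \ C).card = d + 1 - C.card := by
        rw [Finset.card_sdiff_of_subset hCsub, htc]
      rw [hsplit, hCsum, hFsum, hcards]
      have hsjpos : (0:ℝ) < s ^ j := pow_pos hspos j
      rcases Nat.le_one_iff_eq_zero_or_eq_one.mp hC1 with h0 | h1
      · rw [h0]
        simp only [Nat.cast_zero, zero_mul, zero_add, Nat.sub_zero]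
        push_cast
        have hineq : ((d:ℝ) + 1) * s ≤ 2 * Real.sqrt d := by nlinarith
        calc ((d:ℝ) + 1) * (s * s ^ j) = (((d:ℝ) + 1) * s) * s ^ j := by ring
          _ ≤ 2 * Real.sqrt d * s ^ j := by nlinarith
      · rw [h1]
        have : d + 1 - 1 = d := by omega
        rw [this]
        have hdss : (d:ℝ) * (s * s ^ j) = Real.sqrt d * s ^ j := by
          rw [← mul_assoc, hds]
        push_cast
        nlinarith
    have hsum1 : ∑ w ∈ t, (walkCount T n w y : ℝ) ≤
        ∑ w ∈ t, (2 * Real.sqrt d) ^ n * s ^ (T.dist w y) :=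
      Finset.sum_le_sum fun w _ => ih w
    have hrn : (0:ℝ) ≤ (2 * Real.sqrt d) ^ n := by positivity
    calc ∑ w ∈ t, (walkCount T n w y : ℝ)
        ≤ ∑ w ∈ t, (2 * Real.sqrt d) ^ n * s ^ (T.dist w y) := hsum1
      _ = (2 * Real.sqrt d) ^ n * ∑ w ∈ t, s ^ (T.dist w y) := by
          rw [Finset.mul_sum]
      _ ≤ (2 * Real.sqrt d) ^ n * (2 * Real.sqrt d * s ^ j) :=
          mul_le_mul_of_nonneg_left hkey hrn
      _ = (2 * Real.sqrt d) ^ (n + 1) * s ^ j := by ring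

end Main

end RTHKD

/-- **(7.6) of the paper.** For the infinite `(d+1)`-regular tree (`d ≥ 2`, connected,
acyclic, every vertex of degree `d+1`), there is `c > 0` depending only on `d` such that
the number of walks of length `n` between any two vertices is at most `e^{−cn}(d+1)^n`;
equivalently the `n`-step transition probability of the simple random walk satisfies
`p_n(x,y) ≤ e^{−cn}`. -/
theorem regular_tree_heat_kernel_decay (d : ℕ) (hd : 2 ≤ d) :
    ∃ c : ℝ, 0 < c ∧
      ∀ (V : Type*) (T : SimpleGraph V), T.Connected → T.IsAcyclic →
        (∀ v : V, (T.neighborSet v).ncard = d + 1) →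
        ∀ n : ℕ, 1 ≤ n → ∀ x y : V,
          (walkCount T n x y : ℝ) ≤ Real.exp (-c * (n : ℝ)) * ((d : ℝ) + 1) ^ n ∧
          (walkCount T n x y : ℝ) / ((d : ℝ) + 1) ^ n ≤ Real.exp (-c * (n : ℝ)) := by
  have hdR : (2:ℝ) ≤ (d:ℝ) := by exact_mod_cast hd
  have hdpos : (0:ℝ) < d := by linarith
  have hd0 : (0:ℝ) < Real.sqrt d := Real.sqrt_pos.mpr hdpos
  have hsq : Real.sqrt d * Real.sqrt d = (d:ℝ) := Real.mul_self_sqrt hdpos.le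
  have hone : (1:ℝ) < Real.sqrt d := by nlinarith
  have hlt : 2 * Real.sqrt d < (d:ℝ) + 1 := by nlinarith [sq_nonneg (Real.sqrt d - 1)]
  set A : ℝ := ((d:ℝ) + 1) / (2 * Real.sqrt d) with hA_def
  have hApos : 0 < A := by positivity
  have hA1 : 1 < A := (one_lt_div (by positivity)).mpr hlt
  refine ⟨Real.log A, Real.log_pos hA1, ?_⟩
  intro V T hcon hacyc hreg n hn x y
  have hkey := RTHKD.key_bound hd hcon hacyc hreg y n x
  have hs1 : (Real.sqrt (d:ℝ))⁻¹ ≤ 1 := by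
    rw [inv_le_one_iff₀]
    right; exact hone.le
  have h1 : (walkCount T n x y : ℝ) ≤ (2 * Real.sqrt d) ^ n := by
    calc (walkCount T n x y : ℝ)
        ≤ (2 * Real.sqrt d) ^ n * ((Real.sqrt (d:ℝ))⁻¹) ^ (T.dist x y) := hkey
      _ ≤ (2 * Real.sqrt d) ^ n * 1 := by
          apply mul_le_mul_of_nonneg_left _ (by positivity)
          exact pow_le_one₀ (by positivity) hs1
      _ = (2 * Real.sqrt d) ^ n := mul_one _
  have hpowpos : (0:ℝ) < ((d:ℝ) + 1) ^ n := by positivity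
  have hexp : Real.exp (-Real.log A * (n:ℝ)) * ((d:ℝ) + 1) ^ n = (2 * Real.sqrt d) ^ n := by
    have he1 : Real.exp (-Real.log A * (n:ℝ)) = (A⁻¹) ^ n := by
      rw [show -Real.log A * (n:ℝ) = (n:ℝ) * (-Real.log A) by ring, Real.exp_nat_mul,
        Real.exp_neg, Real.exp_log hApos]
    rw [he1, hA_def, inv_div, div_pow, div_mul_cancel₀ _ hpowpos.ne']
  refine ⟨by rw [hexp]; exact h1, ?_⟩
  rw [div_le_iff₀ hpowpos]
  rw [← hexp] at h1
  linarith
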